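/- arXiv:1808.04629 — 2 statements merged into one kernel-verified Lean document; each statement's English description precedes it below -/
import Mathlib

section
/- For every x in Ledrappier's space X, every integer n ≥ 1, and every (s,t) ∈ ℤ×ℤ, one has x(s,t) = x(s+2^n, t) + x(s, t+2^n) in ZMod 2. -/
/-- Ledrappier's space: the set of configurations `x : ℤ × ℤ → ZMod 2` satisfying
`x (s, t) = x (s+1, t) + x (s, t+1)` for all `(s, t) ∈ ℤ × ℤ`. -/
def LedrappierSet : Set ((ℤ × ℤ) → ZMod 2) :=
  {x | ∀ s t : ℤ, x (s, t) = x (s + 1, t) + x (s, t + 1)}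

lemma ledrappier_doubling (x : (ℤ × ℤ) → ZMod 2) (m : ℤ)
    (h : ∀ s t : ℤ, x (s, t) = x (s + m, t) + x (s, t + m)) :
    ∀ s t : ℤ, x (s, t) = x (s + 2 * m, t) + x (s, t + 2 * m) := by
  intro s t
  have h1 := h (s + m) t
  have h2 := h s (t + m)
  rw [h s t, h1, h2]
  have e1 : s + m + m = s + 2 * m := by ring
  have e2 : t + m + m = t + 2 * m := by ring
  rw [e1, e2]
  have : ∀ a : ZMod 2, a + a = 0 := by decide
  linear_combination this (x (s + m, t + m))

lemma ledrappier_pow (x : (ℤ × ℤ) → ZMod 2) (hx : x ∈ LedrappierSet) (n : ℕ) :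
    ∀ s t : ℤ, x (s, t) = x (s + 2 ^ n, t) + x (s, t + 2 ^ n) := by
  induction n with
  | zero => simpa [LedrappierSet] using hx
  | succ k ih =>
    have := ledrappier_doubling x (2 ^ k) ih
    intro s t
    have e : (2 : ℤ) * 2 ^ k = 2 ^ (k + 1) := by ring
    simpa [e] using this s t

/-- For every `x` in Ledrappier's space, every `n ≥ 1` and every `(s, t) ∈ ℤ × ℤ`,
`x (s, t) = x (s + 2^n, t) + x (s, t + 2^n)` in `ZMod 2`. -/
theorem ledrappier_frobenius_relation (x : (ℤ × ℤ) → ZMod 2) (hx : x ∈ LedrappierSet)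
    (n : ℕ) (hn : 1 ≤ n) (s t : ℤ) :
    x (s, t) = x (s + 2 ^ n, t) + x (s, t + 2 ^ n) := by
  exact ledrappier_pow x hx n s t
end

section
/- Let A = {x ∈ X : x(0,0) = 0}. For every integer n ≥ 1, μ(A ∩ σ_{(2^n,0)}^{-1}(A) ∩ σ_{(0,2^n)}^{-1}(A)) = 1/4, whereas μ(A)^3 = 1/8. Consequently the shift action of ℤ² on (X, μ) is not mixing of order 2 (not mixing on 3 sets). -/
open MeasureTheory

/-- Ledrappier's space `X` as a subgroup of the compact abelian group `(ℤ × ℤ) → ZMod 2`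
(with pointwise addition and the product topology): the configurations satisfying
`x (s, t) = x (s+1, t) + x (s, t+1)` for all `(s, t)`. -/
def LedrappierGroup : AddSubgroup ((ℤ × ℤ) → ZMod 2) where
  carrier := {x | ∀ s t : ℤ, x (s, t) = x (s + 1, t) + x (s, t + 1)}
  zero_mem' := by intro s t; simp
  add_mem' := by
    intro a b ha hb s t
    simp only [Pi.add_apply, ha s t, hb s t]
    abel
  neg_mem' := by
    intro a ha s t
    simp only [Pi.neg_apply, ha s t]
    abel

/-- The shift by `g` preserves Ledrappier's space. -/
theorem shift_mem (g : ℤ × ℤ) {x : (ℤ × ℤ) → ZMod 2} (hx : x ∈ LedrappierGroup) :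
    (fun v => x (v + g)) ∈ LedrappierGroup := by
  intro s t
  have h := hx (s + g.1) (t + g.2)
  rcases g with ⟨a, b⟩
  simp only [Prod.mk_add_mk]
  convert h using 3 <;> ring_nf

/-- The shift `σ_g` on Ledrappier's space: `(σ_g x) v = x (v + g)`. -/
def ledShift (g : ℤ × ℤ) (x : LedrappierGroup) : LedrappierGroup :=
  ⟨fun v => x.val (v + g), shift_mem g x.2⟩

/-- A measure-preserving action `T` of a normed abelian group `G` (e.g. `ℤ^d`) on a
probability space `(Y, ν)` is mixing of order `k` (mixing on `k+1` sets) if for all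
measurable sets `A 0, …, A k` and every `ε > 0` there is `N` such that
`|ν(A 0 ∩ T g₁ ⁻¹' A 1 ∩ ⋯ ∩ T g_k ⁻¹' A k) − ∏ ν (A j)| < ε` whenever `‖g i‖ ≥ N` for
all `i` and `‖g i − g j‖ ≥ N` for all `i ≠ j`. -/
def MixingOfOrder {Y : Type*} [MeasurableSpace Y] (ν : Measure Y)
    {G : Type*} [NormedAddCommGroup G] (T : G → Y → Y) (k : ℕ) : Prop :=
  ∀ A : Fin (k + 1) → Set Y, (∀ i, MeasurableSet (A i)) →
    ∀ ε : ℝ, 0 < ε → ∃ N : ℝ,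
      ∀ g : Fin k → G, (∀ i, N ≤ ‖g i‖) → (∀ i j, i ≠ j → N ≤ ‖g i - g j‖) →
        |(ν (A 0 ∩ ⋂ i : Fin k, T (g i) ⁻¹' A i.succ)).toReal -
            ∏ j, (ν (A j)).toReal| < ε


lemma zmod2_cancel : ∀ a c : ZMod 2, a = a + c + c := by decide
lemma zmod2_mid : ∀ a b c : ZMod 2, (a + b) + (b + c) = a + c := by decide
lemma zmod2_pasc : ∀ a b : ZMod 2, a = b + (a + b) := by decide

def ic (n k : ℤ) : ZMod 2 :=
  if 0 ≤ n ∧ 0 ≤ k then (Nat.choose n.toNat k.toNat : ZMod 2) else 0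

lemma ic_pascal (n k : ℤ) (hn : 0 ≤ n) :
    ic (n + 1) (k + 1) = ic n k + ic n (k + 1) := by
  rcases lt_or_ge k 0 with hk | hk
  · rcases eq_or_lt_of_le (by omega : k ≤ -1) with h1 | h1
    · have : k = -1 := by omega
      subst this
      simp only [ic, show (-1 : ℤ) + 1 = 0 by ring]
      rw [if_pos ⟨by omega, le_refl 0⟩, if_neg (by omega), if_pos ⟨hn, le_refl 0⟩]
      simp
    · simp only [ic]
      rw [if_neg (by omega), if_neg (by omega), if_neg (by omega)]
      simp
  · simp only [ic]
    rw [if_pos ⟨by omega, by omega⟩, if_pos ⟨hn, hk⟩, if_pos ⟨hn, by omega⟩,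
      show (n + 1).toNat = n.toNat + 1 by omega, show (k + 1).toNat = k.toNat + 1 by omega,
      Nat.choose_succ_succ, Nat.cast_add]

lemma ic_neg_left {n : ℤ} (k : ℤ) (h : n < 0) : ic n k = 0 := by
  simp only [ic]; rw [if_neg (by omega)]

lemma ic_neg_right (n : ℤ) {k : ℤ} (h : k < 0) : ic n k = 0 := by
  simp only [ic]; rw [if_neg (by omega)]

lemma ic_self {n : ℤ} (h : 0 ≤ n) : ic n n = 1 := by
  simp only [ic]; rw [if_pos ⟨h, h⟩, Nat.choose_self]; simp

lemma ic_zero_left {k : ℤ} (h : 1 ≤ k) : ic 0 k = 0 := by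
  simp only [ic]; rw [if_pos ⟨le_refl 0, by omega⟩, Nat.choose_eq_zero_of_lt (by omega)]
  simp

lemma ic_zero_zero : ic 0 0 = 1 := ic_self le_rfl

/-- An explicit nonzero element of Ledrappier's space. -/
def ledElFun (v : ℤ × ℤ) : ZMod 2 :=
  if 0 ≤ v.2 then ic v.2 (v.1 + v.2) else ic (v.1 - 1) (v.1 + v.2)

lemma ledElFun_mem : ledElFun ∈ LedrappierGroup := by
  intro s t
  simp only [ledElFun]
  rcases le_or_gt 0 t with ht | ht
  · rw [if_pos ht, if_pos ht, if_pos (by omega : (0:ℤ) ≤ t + 1)]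
    have hp := ic_pascal t (s + t) ht
    rw [show s + 1 + t = s + t + 1 by ring, show s + (t + 1) = s + t + 1 by ring, hp]
    exact zmod2_pasc _ _
  · rw [if_neg (by omega)]
    rcases eq_or_lt_of_le (by omega : t ≤ -1) with h1 | h1
    · have ht1 : t = -1 := by omega
      subst ht1
      rw [if_neg (by omega), if_pos (by omega : (0:ℤ) ≤ -1 + 1)]
      rw [show s + 1 - 1 = s by ring, show s + 1 + -1 = s by ring,
        show s + -1 = s - 1 by ring, show (-1 : ℤ) + 1 = 0 by ring,
        show s + (0:ℤ) = s by ring]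
      -- ⊢ ic (s-1) (s-1) = ic s s + ic 0 s
      rcases lt_trichotomy s 0 with hs | hs | hs
      · rw [ic_neg_left _ (by omega), ic_neg_left _ (by omega), ic_neg_right _ (by omega)]
        simp
      · subst hs
        rw [ic_neg_left _ (by omega), ic_self le_rfl]
        decide
      · rw [ic_self (by omega), ic_self (by omega), ic_zero_left (by omega)]
        decide
    · rw [if_neg (by omega), if_neg (by omega)]
      rw [show s + 1 - 1 = s by ring, show s + 1 + t = s + t + 1 by ring,
        show s + (t + 1) = s + t + 1 by ring]
      -- ⊢ ic (s-1) (s+t) = ic s (s+t+1) + ic (s-1) (s+t+1)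
      rcases le_or_gt s 0 with hs | hs
      · rw [ic_neg_left _ (by omega : s - 1 < 0), ic_neg_right s (by omega),
          ic_neg_left _ (by omega : s - 1 < 0)]
        simp
      · have hp := ic_pascal (s - 1) (s + t) (by omega)
        rw [show s - 1 + 1 = s by ring] at hp
        rw [hp]
        exact zmod2_cancel _ _

lemma led_doubling {x : (ℤ × ℤ) → ZMod 2} (hx : x ∈ LedrappierGroup) :
    ∀ (n : ℕ) (s t : ℤ), x (s, t) = x (s + 2 ^ n, t) + x (s, t + 2 ^ n) := by
  intro n
  induction n with
  | zero => intro s t; simpa using hx s t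
  | succ n ih =>
    intro s t
    have h1 := ih s t
    rw [ih (s + 2 ^ n) t, ih s (t + 2 ^ n), zmod2_mid] at h1
    rw [show s + 2 ^ (n + 1) = s + 2 ^ n + 2 ^ n by ring,
      show t + 2 ^ (n + 1) = t + 2 ^ n + 2 ^ n by ring]
    exact h1

instance : MeasurableAdd LedrappierGroup := by
  constructor
  · intro c
    apply Measurable.subtype_mk
    apply measurable_pi_lambda
    intro v
    exact (measurable_of_countable (fun z : ZMod 2 => (c : (ℤ × ℤ) → ZMod 2) v + z)).comp
      ((measurable_pi_apply v).comp measurable_subtype_coe)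
  · intro c
    apply Measurable.subtype_mk
    apply measurable_pi_lambda
    intro v
    exact (measurable_of_countable (fun z : ZMod 2 => z + (c : (ℤ × ℤ) → ZMod 2) v)).comp
      ((measurable_pi_apply v).comp measurable_subtype_coe)

open scoped ENNReal in
lemma fiber_measure {V : Type*} [Fintype V] [AddCommGroup V]
    [MeasurableSpace V] [MeasurableSingletonClass V]
    (μ : Measure LedrappierGroup) [μ.IsAddLeftInvariant] [IsProbabilityMeasure μ]
    (φ : LedrappierGroup →+ V) (hφ : Measurable φ) (hs : Function.Surjective φ) (w : V) :
    μ (φ ⁻¹' {w}) = (Fintype.card V : ℝ≥0∞)⁻¹ := by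
  have heq : ∀ w' : V, μ (φ ⁻¹' {w'}) = μ (φ ⁻¹' {w}) := by
    intro w'
    obtain ⟨c, hc⟩ := hs (w - w')
    have hpre : (fun x => c + x) ⁻¹' (φ ⁻¹' {w}) = φ ⁻¹' {w'} := by
      ext x
      simp only [Set.mem_preimage, Set.mem_singleton_iff, map_add, hc]
      constructor
      · intro h
        have := congrArg (fun z => z - (w - w')) h
        simpa using this
      · intro h
        rw [h]; abel
    rw [← hpre, measure_preimage_add]
  have hmeas : ∀ w' : V, MeasurableSet (φ ⁻¹' {w'}) := fun w' => hφ (measurableSet_singleton w')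
  have hdisj : Pairwise (Function.onFun Disjoint fun w' : V => φ ⁻¹' {w'}) := by
    intro a b hab
    refine Set.disjoint_left.mpr fun x hxa hxb => hab ?_
    simp only [Set.mem_preimage, Set.mem_singleton_iff] at hxa hxb
    rw [← hxa, ← hxb]
  have huniv : (⋃ w' : V, φ ⁻¹' {w'}) = Set.univ := by
    ext x; simp
  have hsum : (1 : ℝ≥0∞) = ∑' w' : V, μ (φ ⁻¹' {w'}) := by
    rw [← measure_univ (μ := μ), ← huniv, measure_iUnion hdisj hmeas]
  rw [tsum_fintype] at hsum
  simp only [heq] at hsum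
  rw [Finset.sum_const, Finset.card_univ, nsmul_eq_mul] at hsum
  have hcard0 : (Fintype.card V : ℝ≥0∞) ≠ 0 := by
    simp [Fintype.card_ne_zero]
  have := congrArg (fun z => (Fintype.card V : ℝ≥0∞)⁻¹ * z) hsum
  simpa [← mul_assoc, ENNReal.inv_mul_cancel hcard0 (ENNReal.natCast_ne_top _)] using this.symm

/-- The cylinder set `A = {x ∈ X : x (0,0) = 0}`. -/
def cylA : Set LedrappierGroup := {x | (x : (ℤ × ℤ) → ZMod 2) (0, 0) = 0}



def evalHom : LedrappierGroup →+ ZMod 2 where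
  toFun x := (x : (ℤ × ℤ) → ZMod 2) (0, 0)
  map_zero' := rfl
  map_add' _ _ := rfl

def pairHom (n : ℕ) : LedrappierGroup →+ ZMod 2 × ZMod 2 where
  toFun x := ((x : (ℤ × ℤ) → ZMod 2) (0, 0), (x : (ℤ × ℤ) → ZMod 2) ((2 ^ n : ℤ), 0))
  map_zero' := rfl
  map_add' _ _ := rfl

def ledA : LedrappierGroup := ⟨ledElFun, ledElFun_mem⟩

def ledB (n : ℕ) : LedrappierGroup :=
  ⟨fun v => ledElFun (v + (-(2 ^ n : ℤ), 0)), shift_mem _ ledElFun_mem⟩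

lemma ledElFun_00 : ledElFun (0, 0) = 1 := by
  simp only [ledElFun]
  rw [if_pos le_rfl]
  simpa using ic_zero_zero

lemma ledElFun_pos (m : ℤ) (hm : 1 ≤ m) : ledElFun (m, 0) = 0 := by
  simp only [ledElFun]
  rw [if_pos le_rfl]
  simpa using ic_zero_left (by omega : (1:ℤ) ≤ m + 0)

lemma ledElFun_neg (m : ℤ) (hm : m ≤ -1) : ledElFun (m, 0) = 0 := by
  simp only [ledElFun]
  rw [if_pos le_rfl]
  simpa using ic_neg_right 0 (by omega : m + 0 < 0)

lemma evalHom_measurable : Measurable (evalHom : LedrappierGroup → ZMod 2) :=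
  (measurable_pi_apply _).comp measurable_subtype_coe

lemma pairHom_measurable (n : ℕ) :
    Measurable (pairHom n : LedrappierGroup → ZMod 2 × ZMod 2) :=
  Measurable.prod ((measurable_pi_apply _).comp measurable_subtype_coe)
    ((measurable_pi_apply _).comp measurable_subtype_coe)

lemma zmod2_cases : ∀ w : ZMod 2, w = 0 ∨ w = 1 := by decide

lemma evalHom_surjective : Function.Surjective (evalHom : LedrappierGroup → ZMod 2) := by
  intro w
  rcases zmod2_cases w with rfl | rfl
  · exact ⟨0, rfl⟩
  · exact ⟨ledA, ledElFun_00⟩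

lemma two_pow_pos (n : ℕ) : (1 : ℤ) ≤ 2 ^ n := one_le_pow₀ (by norm_num)

lemma ledA_val1 (n : ℕ) (hn : 1 ≤ n) :
    (pairHom n) ledA = (1, 0) := by
  have h2 : (2 : ℤ) ≤ 2 ^ n := by
    calc (2:ℤ) = 2 ^ 1 := by norm_num
    _ ≤ 2 ^ n := pow_le_pow_right₀ (by norm_num) hn
  refine Prod.ext ledElFun_00 ?_
  exact ledElFun_pos (2 ^ n : ℤ) (by omega)

lemma ledB_val1 (n : ℕ) :
    (pairHom n) (ledB n) = (0, 1) := by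
  refine Prod.ext ?_ ?_
  · show ledElFun ((0, 0) + (-(2 ^ n : ℤ), 0)) = 0
    have : ((0 : ℤ), (0 : ℤ)) + (-(2 ^ n : ℤ), 0) = (-(2 ^ n : ℤ), 0) := by
      simp
    rw [this]
    exact ledElFun_neg _ (by have := two_pow_pos n; omega)
  · show ledElFun (((2 ^ n : ℤ), 0) + (-(2 ^ n : ℤ), 0)) = 1
    have : ((2 ^ n : ℤ), (0:ℤ)) + (-(2 ^ n : ℤ), 0) = (0, 0) := by
      simp
    rw [this]
    exact ledElFun_00

lemma pairHom_surjective (n : ℕ) (hn : 1 ≤ n) :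
    Function.Surjective (pairHom n : LedrappierGroup → ZMod 2 × ZMod 2) := by
  rintro ⟨w1, w2⟩
  rcases zmod2_cases w1 with rfl | rfl <;> rcases zmod2_cases w2 with rfl | rfl
  · exact ⟨0, rfl⟩
  · exact ⟨ledB n, ledB_val1 n⟩
  · exact ⟨ledA, ledA_val1 n hn⟩
  · refine ⟨ledA + ledB n, ?_⟩
    rw [map_add, ledA_val1 n hn, ledB_val1 n]
    rfl

lemma cylA_eq : cylA = (evalHom : LedrappierGroup → ZMod 2) ⁻¹' {0} := by
  ext x
  simp only [cylA, Set.mem_setOf_eq, Set.mem_preimage, Set.mem_singleton_iff]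
  rfl

lemma cylA_measurable : MeasurableSet cylA := by
  rw [cylA_eq]
  exact evalHom_measurable (measurableSet_singleton _)

lemma triple_eq (n : ℕ) :
    cylA ∩ ledShift ((2 ^ n : ℤ), (0 : ℤ)) ⁻¹' cylA
      ∩ ledShift ((0 : ℤ), (2 ^ n : ℤ)) ⁻¹' cylA
      = (pairHom n : LedrappierGroup → ZMod 2 × ZMod 2) ⁻¹' {(0, 0)} := by
  ext x
  have e1 : ((0:ℤ), (0:ℤ)) + ((2 ^ n : ℤ), 0) = ((2 ^ n : ℤ), 0) := by simp
  have e2 : ((0:ℤ), (0:ℤ)) + ((0 : ℤ), (2 ^ n : ℤ)) = ((0:ℤ), (2 ^ n : ℤ)) := by simp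
  simp only [Set.mem_inter_iff, Set.mem_preimage, Set.mem_singleton_iff, cylA,
    Set.mem_setOf_eq, ledShift, e1, e2, Prod.ext_iff, pairHom, AddMonoidHom.coe_mk,
    ZeroHom.coe_mk]
  have hdbl : (x : (ℤ × ℤ) → ZMod 2) (0, 0)
      = (x : (ℤ × ℤ) → ZMod 2) ((2 ^ n : ℤ), 0) + (x : (ℤ × ℤ) → ZMod 2) (0, (2 ^ n : ℤ)) := by
    simpa using led_doubling x.2 n 0 0
  constructor
  · rintro ⟨⟨h1, h2⟩, _⟩
    exact ⟨h1, h2⟩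
  · rintro ⟨h1, h2⟩
    refine ⟨⟨h1, h2⟩, ?_⟩
    rw [h1, h2] at hdbl
    simpa using hdbl.symm

open scoped ENNReal

lemma mu_triple (μ : Measure LedrappierGroup)
    [μ.IsAddHaarMeasure] [IsProbabilityMeasure μ] (n : ℕ) (hn : 1 ≤ n) :
    μ (cylA ∩ ledShift ((2 ^ n : ℤ), (0 : ℤ)) ⁻¹' cylA
        ∩ ledShift ((0 : ℤ), (2 ^ n : ℤ)) ⁻¹' cylA) = 1 / 4 := by
  rw [triple_eq n, fiber_measure μ (pairHom n) (pairHom_measurable n) (pairHom_surjective n hn)]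
  have : (Fintype.card (ZMod 2 × ZMod 2) : ℝ≥0∞) = 4 := by
    rw [Fintype.card_prod, ZMod.card]
    norm_num
  rw [this, one_div]

lemma mu_cylA (μ : Measure LedrappierGroup)
    [μ.IsAddHaarMeasure] [IsProbabilityMeasure μ] : μ cylA = 2⁻¹ := by
  rw [cylA_eq, fiber_measure μ evalHom evalHom_measurable evalHom_surjective]
  rw [ZMod.card]
  norm_num


/-- For `A = {x ∈ X : x (0,0) = 0}` and every `n ≥ 1`,
`μ(A ∩ σ_{(2^n,0)}⁻¹ A ∩ σ_{(0,2^n)}⁻¹ A) = 1/4`, whereas `μ(A)³ = 1/8`; consequently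
the shift action of `ℤ²` on `(X, μ)` is not mixing of order 2 (not mixing on 3 sets). -/
theorem ledrappier_not_mixing_of_order_two (μ : Measure LedrappierGroup)
    [μ.IsAddHaarMeasure] [IsProbabilityMeasure μ] :
    (∀ n : ℕ, 1 ≤ n →
        μ (cylA ∩ ledShift ((2 ^ n : ℤ), (0 : ℤ)) ⁻¹' cylA
            ∩ ledShift ((0 : ℤ), (2 ^ n : ℤ)) ⁻¹' cylA) = 1 / 4) ∧
    μ cylA ^ 3 = 1 / 8 ∧
    ¬ MixingOfOrder μ ledShift 2 := by
  refine ⟨mu_triple μ, ?_, ?_⟩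
  · rw [mu_cylA μ, ← ENNReal.inv_pow, one_div]
    norm_num
  · intro hmix
    obtain ⟨N, hN⟩ := hmix (fun _ => cylA) (fun _ => cylA_measurable) (1/16) (by norm_num)
    obtain ⟨n, hn⟩ := pow_unbounded_of_one_lt N (one_lt_two (α := ℝ))
    set m := n + 1 with hm
    have hmn : (1:ℕ) ≤ m := Nat.le_add_left 1 n
    have hNm : N ≤ (2:ℝ) ^ m := by
      have : (2:ℝ) ^ n ≤ 2 ^ m := pow_le_pow_right₀ (by norm_num) (Nat.le_succ n)
      linarith
    have h2m : (0:ℝ) < 2 ^ m := by positivity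
    set g : Fin 2 → ℤ × ℤ := ![((2 ^ m : ℤ), 0), (0, (2 ^ m : ℤ))] with hg
    have hnorm0 : ‖((2 ^ m : ℤ), (0:ℤ))‖ = (2:ℝ) ^ m := by
      rw [Prod.norm_def]
      simp [Int.norm_eq_abs, abs_of_nonneg, le_of_lt h2m]
    have hnorm1 : ‖((0:ℤ), (2 ^ m : ℤ))‖ = (2:ℝ) ^ m := by
      rw [Prod.norm_def]
      simp [Int.norm_eq_abs, abs_of_nonneg, le_of_lt h2m]
    have hgn : ∀ i, N ≤ ‖g i‖ := by
      intro i
      fin_cases i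
      · simpa [hg, hnorm0] using hNm
      · simpa [hg, hnorm1] using hNm
    have hd01 : ((2 ^ m : ℤ), (0:ℤ)) - ((0:ℤ), (2 ^ m : ℤ)) = ((2 ^ m : ℤ), -(2 ^ m : ℤ)) := by
      simp [Prod.ext_iff]
    have hd10 : ((0:ℤ), (2 ^ m : ℤ)) - ((2 ^ m : ℤ), (0:ℤ)) = (-(2 ^ m : ℤ), (2 ^ m : ℤ)) := by
      simp [Prod.ext_iff]
    have hn01 : ‖((2 ^ m : ℤ), -(2 ^ m : ℤ))‖ = (2:ℝ) ^ m := by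
      rw [Prod.norm_def]
      simp [Int.norm_eq_abs, abs_of_nonneg, le_of_lt h2m]
    have hn10 : ‖(-(2 ^ m : ℤ), (2 ^ m : ℤ))‖ = (2:ℝ) ^ m := by
      rw [Prod.norm_def]
      simp [Int.norm_eq_abs, abs_of_nonneg, le_of_lt h2m]
    have hgd : ∀ i j, i ≠ j → N ≤ ‖g i - g j‖ := by
      intro i j hij
      fin_cases i <;> fin_cases j
      · exact absurd rfl hij
      · show N ≤ ‖((2 ^ m : ℤ), (0:ℤ)) - ((0:ℤ), (2 ^ m : ℤ))‖
        rw [hd01, hn01]; exact hNm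
      · show N ≤ ‖((0:ℤ), (2 ^ m : ℤ)) - ((2 ^ m : ℤ), (0:ℤ))‖
        rw [hd10, hn10]; exact hNm
      · exact absurd rfl hij
    have hkey := hN g hgn hgd
    have hiInter : (⋂ i : Fin 2, ledShift (g i) ⁻¹' cylA)
        = ledShift (g 0) ⁻¹' cylA ∩ ledShift (g 1) ⁻¹' cylA := by
      ext x
      simp [Fin.forall_fin_two]
    have hset : (fun _ : Fin 3 => cylA) 0 ∩ (⋂ i : Fin 2, ledShift (g i) ⁻¹' (fun _ : Fin 3 => cylA) i.succ)
        = cylA ∩ ledShift ((2 ^ m : ℤ), (0 : ℤ)) ⁻¹' cylA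
            ∩ ledShift ((0 : ℤ), (2 ^ m : ℤ)) ⁻¹' cylA := by
      show cylA ∩ (⋂ i : Fin 2, ledShift (g i) ⁻¹' cylA) = _
      rw [hiInter, ← Set.inter_assoc]
      rfl
    rw [hset, mu_triple μ m hmn] at hkey
    have hprod : ∏ j : Fin 3, (μ ((fun _ : Fin 3 => cylA) j)).toReal = (1/2 : ℝ) ^ 3 := by
      simp only [mu_cylA μ]
      rw [Finset.prod_const]
      norm_num
    rw [hprod] at hkey
    rw [abs_of_nonneg (by norm_num)] at hkey
    norm_num at hkey
end
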